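/- Dodgson condensation: for any n×n matrix A over a commutative ring (or field), with n ≥ 2, det(A) · det(A') = det(A_{NW}) · det(A_{SE}) − det(A_{NE}) · det(A_{SW}), where A' is the central (n−2)×(n−2) submatrix obtained by deleting the first and last rows and columns, and A_{NW}, A_{SE}, A_{NE}, A_{SW} are the four (n−1)×(n−1) connected corner submatrices obtained by deleting the last row and last column, first row and first column, last row and first column, and first row and last column, respectively. -/

import Mathlib

open Matrix

private theorem fin_succ_lt_add_two (n : ℕ) (k : Fin n) : (k : ℕ) + 1 < n + 2 := by omega

private def cornerEquiv (n : ℕ) : Fin 2 ⊕ Fin n ≃ Fin (n + 2) where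
  toFun x := Sum.elim (fun r : Fin 2 => if r = 0 then 0 else Fin.last (n + 1))
    (fun k : Fin n => ⟨(k : ℕ) + 1, fin_succ_lt_add_two n k⟩) x
  invFun i := if h0 : (i : ℕ) = 0 then Sum.inl 0 else if hl : (i : ℕ) = n + 1 then Sum.inl 1
    else Sum.inr ⟨(i : ℕ) - 1, by omega⟩
  left_inv := by
    rintro (r | k)
    · fin_cases r <;> simp [Fin.ext_iff, -Fin.val_eq_zero_iff]
    · have hk : (k : ℕ) < n := k.isLt
      simp only [Sum.elim_inr]
      split_ifs
      · omega
      simp; omega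
  right_inv := by
    intro i
    by_cases h0 : (i : ℕ) = 0
    · dsimp only
      rw [dif_pos h0]
      simp only [Sum.elim_inl, if_pos rfl]
      exact Fin.ext h0.symm
    · by_cases hl : (i : ℕ) = n + 1
      · dsimp only
        rw [dif_neg h0, dif_pos hl]
        simp only [Sum.elim_inl]
        rw [if_neg (by decide)]
        exact Fin.ext (by simp [hl])
      · dsimp only
        rw [dif_neg h0, dif_neg hl]
        simp only [Sum.elim_inr]
        exact Fin.ext (by simp; omega)

private theorem dodgson_key {R : Type*} [CommRing R] (n : ℕ)
    (A : Matrix (Fin (n + 2)) (Fin (n + 2)) R) :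
    Matrix.det A * (Matrix.det A *
      Matrix.det (Matrix.of fun i j : Fin n =>
        A ⟨(i : ℕ) + 1, fin_succ_lt_add_two n i⟩ ⟨(j : ℕ) + 1, fin_succ_lt_add_two n j⟩)) =
    Matrix.det A *
    (Matrix.det (Matrix.of fun i j : Fin (n + 1) => A i.castSucc j.castSucc) *
      Matrix.det (Matrix.of fun i j : Fin (n + 1) => A i.succ j.succ) -
    Matrix.det (Matrix.of fun i j : Fin (n + 1) => A i.castSucc j.succ) *
      Matrix.det (Matrix.of fun i j : Fin (n + 1) => A i.succ j.castSucc)) := by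
  set L : Fin (n + 2) := Fin.last (n + 1) with hL
  set B : Matrix (Fin (n + 2)) (Fin (n + 2)) R := Matrix.of fun i j =>
    if j = 0 then adjugate A i 0 else if j = L then adjugate A i L
    else if i = j then 1 else 0 with hBdef
  set e := cornerEquiv n with he
  -- entries of A * B
  have hAB0 : ∀ i, (A * B) i 0 = A.det * (if i = (0 : Fin (n + 2)) then 1 else 0) := by
    intro i
    have h := congrFun (congrFun (mul_adjugate A) i) 0
    simp only [Matrix.mul_apply, Matrix.smul_apply, one_apply, smul_eq_mul] at h
    simpa [hBdef, Matrix.mul_apply] using h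
  have hABL : ∀ i, (A * B) i L = A.det * (if i = L then 1 else 0) := by
    intro i
    have h := congrFun (congrFun (mul_adjugate A) i) L
    simp only [Matrix.mul_apply, Matrix.smul_apply, one_apply, smul_eq_mul] at h
    have hL0 : L ≠ (0 : Fin (n + 2)) := by simp [hL, Fin.ext_iff]
    simpa [hBdef, Matrix.mul_apply, hL0] using h
  have hABmid : ∀ (i) (j : Fin n), (A * B) i ⟨(j : ℕ) + 1, by omega⟩ = A i ⟨(j : ℕ) + 1, by omega⟩ := by
    intro i j
    have hj0 : (⟨(j : ℕ) + 1, by omega⟩ : Fin (n + 2)) ≠ 0 := by simp [Fin.ext_iff]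
    have hjL : (⟨(j : ℕ) + 1, by omega⟩ : Fin (n + 2)) ≠ L := by
      simp [hL, Fin.ext_iff]; omega
    simp [hBdef, Matrix.mul_apply, hj0, hjL, mul_ite]
  -- det B
  have hBblocks : B.submatrix e e = fromBlocks
      !![adjugate A 0 0, adjugate A 0 L; adjugate A L 0, adjugate A L L]
      0
      (Matrix.of fun (i : Fin n) (r : Fin 2) =>
        adjugate A (⟨(i : ℕ) + 1, by omega⟩ : Fin (n + 2)) (if r = 0 then 0 else L))
      1 := by
    ext x y
    rcases x with r | i <;> rcases y with s | j
    · fin_cases r <;> fin_cases s <;>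
        simp [hBdef, he, cornerEquiv, hL, Fin.ext_iff, -Fin.val_eq_zero_iff]
    · fin_cases r <;>
        simp [hBdef, he, cornerEquiv, hL, Fin.ext_iff, -Fin.val_eq_zero_iff, Fin.val_last, Nat.ne_of_lt j.isLt, (Nat.ne_of_lt j.isLt).symm]
    · fin_cases s <;> simp [hBdef, he, cornerEquiv, hL, Fin.ext_iff, -Fin.val_eq_zero_iff]
    · have : ((⟨(i : ℕ) + 1, by omega⟩ : Fin (n + 2)) = ⟨(j : ℕ) + 1, by omega⟩) ↔ i = j := by
        simp [Fin.ext_iff]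
      simp [hBdef, he, cornerEquiv, hL, Fin.ext_iff, -Fin.val_eq_zero_iff, one_apply]
      omega
  have hdetB : B.det = adjugate A 0 0 * adjugate A L L - adjugate A 0 L * adjugate A L 0 := by
    rw [← det_submatrix_equiv_self e B, hBblocks, det_fromBlocks_zero₁₂, det_one, mul_one,
      det_fin_two_of]
  -- det (A * B)
  have hABblocks : (A * B).submatrix e e = fromBlocks
      !![A.det, 0; 0, A.det]
      (Matrix.of fun (r : Fin 2) (j : Fin n) =>
        A (if r = 0 then 0 else L) (⟨(j : ℕ) + 1, by omega⟩ : Fin (n + 2)))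
      0
      (Matrix.of fun i j : Fin n =>
        A ⟨(i : ℕ) + 1, by omega⟩ ⟨(j : ℕ) + 1, by omega⟩) := by
    ext x y
    rcases x with r | i <;> rcases y with s | j
    · fin_cases r <;> fin_cases s <;>
        simp [he, cornerEquiv, hAB0, hL ▸ hABL, hL, Fin.ext_iff, -Fin.val_eq_zero_iff]
    · fin_cases r <;> simp [he, cornerEquiv, hABmid, hL]
    · fin_cases s <;>
        simp [he, cornerEquiv, hAB0, hL ▸ hABL, hL, Fin.ext_iff, -Fin.val_eq_zero_iff] <;> omega
    · simp [he, cornerEquiv, hABmid]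
  have hdetAB : (A * B).det = (A.det * A.det) *
      Matrix.det (Matrix.of fun i j : Fin n =>
        A ⟨(i : ℕ) + 1, by omega⟩ ⟨(j : ℕ) + 1, by omega⟩) := by
    rw [← det_submatrix_equiv_self e (A * B), hABblocks, det_fromBlocks_zero₂₁, det_fin_two_of]
    ring_nf
  -- adjugate entries as corner minors
  have hadj00 : adjugate A 0 0 =
      Matrix.det (Matrix.of fun i j : Fin (n + 1) => A i.succ j.succ) := by
    rw [adjugate_fin_succ_eq_det_submatrix]
    simp [Fin.zero_succAbove, submatrix]
  have hadjLL : adjugate A L L =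
      Matrix.det (Matrix.of fun i j : Fin (n + 1) => A i.castSucc j.castSucc) := by
    rw [adjugate_fin_succ_eq_det_submatrix]
    simp [hL, Fin.succAbove_last, submatrix]
  have hadj0L : adjugate A 0 L = (-1) ^ ((n : ℕ) + 1) *
      Matrix.det (Matrix.of fun i j : Fin (n + 1) => A i.castSucc j.succ) := by
    rw [adjugate_fin_succ_eq_det_submatrix]
    simp [hL, Fin.succAbove_last, Fin.zero_succAbove, submatrix]
  have hadjL0 : adjugate A L 0 = (-1) ^ ((n : ℕ) + 1) *
      Matrix.det (Matrix.of fun i j : Fin (n + 1) => A i.succ j.castSucc) := by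
    rw [adjugate_fin_succ_eq_det_submatrix]
    simp [hL, Fin.succAbove_last, Fin.zero_succAbove, submatrix]
  have hsq : ((-1 : R) ^ ((n : ℕ) + 1)) * ((-1) ^ ((n : ℕ) + 1)) = 1 := by
    rw [← pow_add]
    exact Even.neg_one_pow ⟨n + 1, rfl⟩
  calc A.det * (A.det * _) = (A * B).det := by rw [hdetAB]; ring
    _ = A.det * B.det := by rw [det_mul]
    _ = _ := by
        rw [hdetB, hadj00, hadjLL, hadj0L, hadjL0]
        have h2 : ∀ x y : R, ((-1) ^ ((n : ℕ) + 1) * x) * ((-1) ^ ((n : ℕ) + 1) * y) = x * y := by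
          intro x y
          calc ((-1 : R) ^ ((n : ℕ) + 1) * x) * ((-1) ^ ((n : ℕ) + 1) * y)
              = ((-1) ^ ((n : ℕ) + 1) * (-1) ^ ((n : ℕ) + 1)) * (x * y) := by ring
            _ = x * y := by rw [hsq, one_mul]
        rw [h2]
        ring

theorem dodgson_condensation {R : Type*} [CommRing R] (n : ℕ)
    (A : Matrix (Fin (n + 2)) (Fin (n + 2)) R) :
    Matrix.det A *
      Matrix.det (Matrix.of fun i j : Fin n =>
        A ⟨(i : ℕ) + 1, by omega⟩ ⟨(j : ℕ) + 1, by omega⟩) =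
    Matrix.det (Matrix.of fun i j : Fin (n + 1) => A i.castSucc j.castSucc) *
      Matrix.det (Matrix.of fun i j : Fin (n + 1) => A i.succ j.succ) -
    Matrix.det (Matrix.of fun i j : Fin (n + 1) => A i.castSucc j.succ) *
      Matrix.det (Matrix.of fun i j : Fin (n + 1) => A i.succ j.castSucc) := by
  -- first prove it for the generic matrix over ℤ, where `det` is cancellable
  set σ := MvPolynomial (Fin (n + 2) × Fin (n + 2)) ℤ
  set G : Matrix (Fin (n + 2)) (Fin (n + 2)) σ := mvPolynomialX (Fin (n + 2)) (Fin (n + 2)) ℤ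
  have hG : G.det ≠ 0 := det_mvPolynomialX_ne_zero (Fin (n + 2)) ℤ
  have hgen := mul_left_cancel₀ hG (dodgson_key n G)
  -- specialize via the evaluation ring hom
  set φ : σ →+* R := MvPolynomial.eval₂Hom (Int.castRingHom R) (fun p => A p.1 p.2) with hφ
  have hA : ∀ i j, φ (G i j) = A i j := by
    intro i j
    simp only [hφ, G, mvPolynomialX_apply]
    exact MvPolynomial.eval₂Hom_X' _ _ _
  have hdet : ∀ {m : ℕ} (f g : Fin m → Fin (n + 2)),
      φ (Matrix.det (Matrix.of fun i j : Fin m => G (f i) (g j))) =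
        Matrix.det (Matrix.of fun i j : Fin m => A (f i) (g j)) := by
    intro m f g
    rw [RingHom.map_det]
    congr 1
    ext i j
    simp [hA]
  have := congrArg φ hgen
  rw [_root_.map_sub, _root_.map_mul, _root_.map_mul, _root_.map_mul] at this
  rw [hdet (fun i : Fin n => ⟨(i : ℕ) + 1, by omega⟩) (fun j : Fin n => ⟨(j : ℕ) + 1, by omega⟩),
    hdet Fin.castSucc Fin.castSucc, hdet Fin.succ Fin.succ, hdet Fin.castSucc Fin.succ,
    hdet Fin.succ Fin.castSucc] at this
  have hdetA : φ G.det = A.det := by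
    rw [RingHom.map_det]
    congr 1
    ext i j
    simp [hA]
  rw [hdetA] at this
  exact this
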